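/- Let f be a generalised arrangement of n pseudolines. If there exist indices i ≠ j and two intersection points x₁, x₂ ∈ Z(i,j) whose levels differ (the number of indices k ∉ {i,j} with f k x₁ > f i x₁ is different from the number of indices k ∉ {i,j} with f k x₂ > f i x₂), then D(f) is not a Condorcet domain. -/

import Mathlib

open Set

/-- `r` is a (strict) linear order: irreflexive, transitive and total. -/
def IsLinOrder {A : Type*} (r : A → A → Prop) : Prop :=
  IsStrictTotalOrder A r

/-- Strict pairwise majority relation of a profile `P` of `m` orders:
`a` is majority-preferred to `b` if more orders in the profile rank `a` above `b`
than rank `b` above `a`. -/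
def MajPrefers {A : Type*} {m : ℕ} (P : Fin m → (A → A → Prop)) (a b : A) : Prop :=
  Nat.card {i : Fin m // P i a b} > Nat.card {i : Fin m // P i b a}

/-- `D` is a Condorcet domain: every profile of an odd number of (not necessarily
distinct) orders from `D` has a transitive strict pairwise majority relation. -/
def IsCondorcet {A : Type*} (D : Set (A → A → Prop)) : Prop :=
  ∀ (m : ℕ) (P : Fin m → (A → A → Prop)), Odd m → (∀ i, P i ∈ D) →
    Transitive (MajPrefers P)

/-- `D` is a maximal Condorcet domain: it is Condorcet, and no set of linear
orders strictly containing it is Condorcet. -/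
def IsMaximalCondorcet {A : Type*} (D : Set (A → A → Prop)) : Prop :=
  IsCondorcet D ∧
    ∀ D' : Set (A → A → Prop), (∀ r ∈ D', IsLinOrder r) → D ⊂ D' → ¬ IsCondorcet D'

/-- Never-top condition for `x` on the triple `T`: no order in `D` ranks `x`
above both other elements of `T`. -/
def NeverTop {A : Type*} (D : Set (A → A → Prop)) (T : Finset A) (x : A) : Prop :=
  ∀ p ∈ D, ¬ (∀ y ∈ T, y ≠ x → p x y)

/-- Never-bottom condition for `x` on the triple `T`: no order in `D` ranks `x`
below both other elements of `T`. -/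
def NeverBottom {A : Type*} (D : Set (A → A → Prop)) (T : Finset A) (x : A) : Prop :=
  ∀ p ∈ D, ¬ (∀ y ∈ T, y ≠ x → p y x)

/-- Never-middle condition for `x` on the triple `T`: no order in `D` ranks `x`
between the two other elements of `T`. -/
def NeverMiddle {A : Type*} (D : Set (A → A → Prop)) (T : Finset A) (x : A) : Prop :=
  ∀ p ∈ D, ¬ (∃ y ∈ T, ∃ z ∈ T, y ≠ x ∧ z ≠ x ∧ p y x ∧ p x z)

/-- `D` is peak-pit: every triple has an alternative that is never-top or never-bottom. -/
def IsPeakPit {A : Type*} (D : Set (A → A → Prop)) : Prop :=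
  ∀ T : Finset A, T.card = 3 → ∃ x ∈ T, NeverTop D T x ∨ NeverBottom D T x

/-- `D` is Arrow's single-peaked: every triple has a never-bottom alternative. -/
def IsArrowSP {A : Type*} (D : Set (A → A → Prop)) : Prop :=
  ∀ T : Finset A, T.card = 3 → ∃ x ∈ T, NeverBottom D T x

/-- `D` has maximal width: it contains two completely reversed linear orders. -/
def HasMaximalWidth {A : Type*} (D : Set (A → A → Prop)) : Prop :=
  ∃ p ∈ D, (fun a b => p b a) ∈ D

/-- A generalised arrangement of `n` pseudolines: continuous functions on `[0,1]`,
starting (at `0`) in strictly decreasing order of index, ending (at `1`) at pairwise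
distinct values; every two of them intersect in a finite set of interior points, at
each of which their difference changes sign; and no three share a common point. -/
structure GenArrangement (n : ℕ) where
  line : Fin n → ℝ → ℝ
  continuous : ∀ i, ContinuousOn (line i) (Set.Icc (0:ℝ) 1)
  start_anti : ∀ i j : Fin n, i < j → line j 0 < line i 0
  end_distinct : ∀ i j : Fin n, i ≠ j → line i 1 ≠ line j 1
  inter_finite : ∀ i j : Fin n, i ≠ j →
    {x : ℝ | x ∈ Set.Ioo (0:ℝ) 1 ∧ line i x = line j x}.Finite
  sign_change : ∀ i j : Fin n, i ≠ j → ∀ x ∈ Set.Ioo (0:ℝ) 1, line i x = line j x →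
    ∃ ε > 0, Set.Ioo (x - ε) (x + ε) ⊆ Set.Ioo (0:ℝ) 1 ∧
      ∀ y ∈ Set.Ioo (x - ε) x, ∀ z ∈ Set.Ioo x (x + ε),
        (line i y - line j y) * (line i z - line j z) < 0
  no_triple : ∀ i j k : Fin n, i ≠ j → j ≠ k → i ≠ k → ∀ x ∈ Set.Icc (0:ℝ) 1,
    ¬ (line i x = line j x ∧ line j x = line k x)

namespace GenArrangement

/-- The set `Z(i,j)` of interior intersection points of pseudolines `i` and `j`. -/
def Z {n : ℕ} (g : GenArrangement n) (i j : Fin n) : Set ℝ :=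
  {x : ℝ | x ∈ Set.Ioo (0:ℝ) 1 ∧ g.line i x = g.line j x}

/-- The level of an intersection point `x ∈ Z(i,j)`: the number of indices
`k ∉ {i,j}` with `f k x > f i x`. -/
noncomputable def level {n : ℕ} (g : GenArrangement n) (i j : Fin n) (x : ℝ) : ℕ :=
  Nat.card {k : Fin n // k ≠ i ∧ k ≠ j ∧ g.line i x < g.line k x}

/-- `g` is tame: for every pair of pseudolines, all their intersection points
are at the same level. -/
def Tame {n : ℕ} (g : GenArrangement n) : Prop :=
  ∀ i j : Fin n, i ≠ j → ∀ x₁ ∈ g.Z i j, ∀ x₂ ∈ g.Z i j,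
    g.level i j x₁ = g.level i j x₂

/-- `g` is a classical (simple) arrangement: every two pseudolines cross exactly once. -/
def IsClassical {n : ℕ} (g : GenArrangement n) : Prop :=
  ∀ i j : Fin n, i ≠ j → ∃ x : ℝ, g.Z i j = {x}

/-- `S` is a chamber set of `g`: for some `x ∈ [0,1]` and level `y` avoiding all
the lines, `S` is the set of lines passing above the point `(x, y)`. -/
def IsChamberSet {n : ℕ} (g : GenArrangement n) (S : Set (Fin n)) : Prop :=
  ∃ x ∈ Set.Icc (0:ℝ) 1, ∃ y : ℝ, (∀ i, g.line i x ≠ y) ∧ S = {i : Fin n | y < g.line i x}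

/-- The domain `D(g)`: all linear orders on `Fin n` all of whose prefix sets
(equivalently, all of whose upward closed sets) are chamber sets of `g`. -/
def domain {n : ℕ} (g : GenArrangement n) : Set (Fin n → Fin n → Prop) :=
  {r | IsLinOrder r ∧
    ∀ S : Set (Fin n), (∀ a ∈ S, ∀ b, r b a → b ∈ S) → g.IsChamberSet S}

end GenArrangement

/-- `t` is the top element of the order `p`. -/
def IsTopOf {A : Type*} (p : A → A → Prop) (t : A) : Prop :=
  ∀ y, y ≠ t → p t y

/-- `p` is single-peaked with respect to the axis `ax`: whenever `a` lies strictly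
between `b` and the top of `p` on the axis, `p` ranks `a` above `b`. -/
def SinglePeakedWRT {A : Type*} (ax p : A → A → Prop) : Prop :=
  ∀ t, IsTopOf p t → ∀ a b, ((ax b a ∧ ax a t) ∨ (ax t a ∧ ax a b)) → p a b

/-- The linear order determined by a list, ranking `a` above `b` iff `a` occurs
earlier in the list. -/
def ofList {A : Type*} [DecidableEq A] (l : List A) (a b : A) : Prop :=
  l.idxOf a < l.idxOf b

/-- The domain `D_{4,2}` of eight linear orders on `{1,2,3,4}` (represented as
`Fin 4`, with alternative `i+1` encoded as `i`): 1234, 2134, 2314, 3214, 2341,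
3241, 2431, 4231. -/
def D42 : Set (Fin 4 → Fin 4 → Prop) :=
  {ofList [0,1,2,3], ofList [1,0,2,3], ofList [1,2,0,3], ofList [2,1,0,3],
   ofList [1,2,3,0], ofList [2,1,3,0], ofList [1,3,2,0], ofList [3,1,2,0]}

/-- The domain `D_{3,1}` of four linear orders on `{1,2,3}` (represented as `Fin 3`,
with alternative `i+1` encoded as `i`): 123, 213, 231, 321. -/
def D31 : Set (Fin 3 → Fin 3 → Prop) :=
  {ofList [0,1,2], ofList [1,0,2], ofList [1,2,0], ofList [2,1,0]}

lemma card3_011 (Q : Fin 3 → Prop) (h0 : ¬ Q 0) (h1 : Q 1) (h2 : Q 2) :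
    Nat.card {v : Fin 3 // Q v} = 2 := by
  have hset : {v : Fin 3 | Q v} = {1, 2} := by ext v; fin_cases v <;> simp_all
  rw [show Nat.card {v : Fin 3 // Q v} = Set.ncard {v : Fin 3 | Q v} from
    (Nat.card_coe_set_eq _).symm, hset, Set.ncard_pair (by decide)]

lemma card3_101 (Q : Fin 3 → Prop) (h0 : Q 0) (h1 : ¬ Q 1) (h2 : Q 2) :
    Nat.card {v : Fin 3 // Q v} = 2 := by
  have hset : {v : Fin 3 | Q v} = {0, 2} := by ext v; fin_cases v <;> simp_all
  rw [show Nat.card {v : Fin 3 // Q v} = Set.ncard {v : Fin 3 | Q v} from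
    (Nat.card_coe_set_eq _).symm, hset, Set.ncard_pair (by decide)]

lemma card3_110 (Q : Fin 3 → Prop) (h0 : Q 0) (h1 : Q 1) (h2 : ¬ Q 2) :
    Nat.card {v : Fin 3 // Q v} = 2 := by
  have hset : {v : Fin 3 | Q v} = {0, 1} := by ext v; fin_cases v <;> simp_all
  rw [show Nat.card {v : Fin 3 // Q v} = Set.ncard {v : Fin 3 | Q v} from
    (Nat.card_coe_set_eq _).symm, hset, Set.ncard_pair (by decide)]

lemma card3_100 (Q : Fin 3 → Prop) (h0 : Q 0) (h1 : ¬ Q 1) (h2 : ¬ Q 2) :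
    Nat.card {v : Fin 3 // Q v} = 1 := by
  have hset : {v : Fin 3 | Q v} = {0} := by ext v; fin_cases v <;> simp_all
  rw [show Nat.card {v : Fin 3 // Q v} = Set.ncard {v : Fin 3 | Q v} from
    (Nat.card_coe_set_eq _).symm, hset, Set.ncard_singleton]

lemma card3_010 (Q : Fin 3 → Prop) (h0 : ¬ Q 0) (h1 : Q 1) (h2 : ¬ Q 2) :
    Nat.card {v : Fin 3 // Q v} = 1 := by
  have hset : {v : Fin 3 | Q v} = {1} := by ext v; fin_cases v <;> simp_all
  rw [show Nat.card {v : Fin 3 // Q v} = Set.ncard {v : Fin 3 | Q v} from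
    (Nat.card_coe_set_eq _).symm, hset, Set.ncard_singleton]

lemma card3_001 (Q : Fin 3 → Prop) (h0 : ¬ Q 0) (h1 : ¬ Q 1) (h2 : Q 2) :
    Nat.card {v : Fin 3 // Q v} = 1 := by
  have hset : {v : Fin 3 | Q v} = {2} := by ext v; fin_cases v <;> simp_all
  rw [show Nat.card {v : Fin 3 // Q v} = Set.ncard {v : Fin 3 | Q v} from
    (Nat.card_coe_set_eq _).symm, hset, Set.ncard_singleton]


namespace GenArrangement

variable {n : ℕ} (g : GenArrangement n)

/-- set of points where some two lines agree -/
def badSet : Set ℝ := {x | x ∈ Set.Ioo (0:ℝ) 1 ∧ ∃ a b : Fin n, a ≠ b ∧ g.line a x = g.line b x}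

lemma badSet_finite : (g.badSet).Finite := by
  have hsub : g.badSet ⊆ ⋃ p : Fin n × Fin n,
      {x : ℝ | x ∈ Set.Ioo (0:ℝ) 1 ∧ p.1 ≠ p.2 ∧ g.line p.1 x = g.line p.2 x} := by
    rintro x ⟨hx, a, b, hab, he⟩
    exact Set.mem_iUnion.mpr ⟨(a, b), hx, hab, he⟩
  refine Set.Finite.subset (Set.finite_iUnion fun p => ?_) hsub
  by_cases h : p.1 = p.2
  · have : {x : ℝ | x ∈ Set.Ioo (0:ℝ) 1 ∧ p.1 ≠ p.2 ∧ g.line p.1 x = g.line p.2 x} = ∅ := by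
      ext x; simp [h]
    rw [this]; exact Set.finite_empty
  · exact (g.inter_finite p.1 p.2 h).subset (fun x hx => ⟨hx.1, hx.2.2⟩)

lemma pers (a b : Fin n) (x : ℝ) (hx : x ∈ Set.Ioo (0:ℝ) 1) (h : g.line a x < g.line b x) :
    ∃ δ > 0, ∀ y : ℝ, |y - x| < δ → y ∈ Set.Ioo (0:ℝ) 1 ∧ g.line a y < g.line b y := by
  have hxI : x ∈ Set.Icc (0:ℝ) 1 := Set.mem_Icc_of_Ioo hx
  have hc : ContinuousWithinAt (fun y => g.line b y - g.line a y) (Set.Icc (0:ℝ) 1) x :=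
    ((g.continuous b).sub (g.continuous a)) x hxI
  have hn : nhdsWithin x (Set.Icc (0:ℝ) 1) = nhds x :=
    nhdsWithin_eq_nhds.mpr (Icc_mem_nhds hx.1 hx.2)
  have h1 : ∀ᶠ y in nhds x, 0 < g.line b y - g.line a y := by
    rw [← hn]
    exact hc.eventually (eventually_gt_nhds (show (0:ℝ) < (fun y => g.line b y - g.line a y) x from sub_pos.mpr h))
  have h2 : ∀ᶠ y in nhds x, y ∈ Set.Ioo (0:ℝ) 1 := isOpen_Ioo.eventually_mem hx
  obtain ⟨δ, hδ, hball⟩ := Metric.eventually_nhds_iff.mp (h1.and h2)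
  refine ⟨δ, hδ, fun y hy => ?_⟩
  have := hball (show dist y x < δ by rwa [Real.dist_eq])
  exact ⟨this.2, by linarith [this.1]⟩

lemma near_cross (i j : Fin n) (hij : i ≠ j) (x : ℝ) (hx : x ∈ Set.Ioo (0:ℝ) 1)
    (he : g.line i x = g.line j x) (δ : ℝ) (hδ : 0 < δ) :
    ∃ u v : ℝ, |u - x| < δ ∧ |v - x| < δ ∧ u ∈ Set.Ioo (0:ℝ) 1 ∧ v ∈ Set.Ioo (0:ℝ) 1 ∧
      (∀ a b : Fin n, a ≠ b → g.line a u ≠ g.line b u) ∧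
      (∀ a b : Fin n, a ≠ b → g.line a v ≠ g.line b v) ∧
      g.line j u < g.line i u ∧ g.line i v < g.line j v := by
  obtain ⟨ε, hε, hsub, hsign⟩ := g.sign_change i j hij x hx he
  have hη0 : 0 < min ε δ := lt_min hε hδ
  have hηε : min ε δ ≤ ε := min_le_left _ _
  have hηδ : min ε δ ≤ δ := min_le_right _ _
  obtain ⟨p, hp⟩ := ((Set.Ioo_infinite (by linarith : x - min ε δ < x)).diff g.badSet_finite).nonempty
  obtain ⟨q, hq⟩ := ((Set.Ioo_infinite (by linarith : x < x + min ε δ)).diff g.badSet_finite).nonempty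
  have hpm := hp.1
  have hqm := hq.1
  have hpε : p ∈ Set.Ioo (x - ε) x := ⟨by linarith [hpm.1], hpm.2⟩
  have hqε : q ∈ Set.Ioo x (x + ε) := ⟨hqm.1, by linarith [hqm.2]⟩
  have hpI : p ∈ Set.Ioo (0:ℝ) 1 := hsub ⟨hpε.1, by linarith [hpε.2]⟩
  have hqI : q ∈ Set.Ioo (0:ℝ) 1 := hsub ⟨by linarith [hqε.1], hqε.2⟩
  have hpd : ∀ a b : Fin n, a ≠ b → g.line a p ≠ g.line b p :=
    fun a b hab hc => hp.2 ⟨hpI, a, b, hab, hc⟩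
  have hqd : ∀ a b : Fin n, a ≠ b → g.line a q ≠ g.line b q :=
    fun a b hab hc => hq.2 ⟨hqI, a, b, hab, hc⟩
  have hpx : |p - x| < δ := abs_sub_lt_iff.mpr ⟨by linarith [hpm.2], by linarith [hpm.1]⟩
  have hqx : |q - x| < δ := abs_sub_lt_iff.mpr ⟨by linarith [hqm.2], by linarith [hqm.1]⟩
  have hs := hsign p hpε q hqε
  rcases mul_neg_iff.mp hs with ⟨h1, h2⟩ | ⟨h1, h2⟩
  · exact ⟨p, q, hpx, hqx, hpI, hqI, hpd, hqd, by linarith, by linarith⟩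
  · exact ⟨q, p, hqx, hpx, hqI, hpI, hqd, hpd, by linarith, by linarith⟩


lemma valueOrder_mem (x : ℝ) (hx : x ∈ Set.Icc (0:ℝ) 1)
    (hd : ∀ a b : Fin n, a ≠ b → g.line a x ≠ g.line b x) :
    (fun a b => g.line b x < g.line a x) ∈ g.domain := by
  constructor
  · refine { trichotomous := ?_, irrefl := ?_, trans := ?_ }
    · intro a b
      rcases lt_trichotomy (g.line a x) (g.line b x) with h | h | h
      · exact fun _ h2 => absurd h h2
      · exact fun _ _ => by by_contra hab; exact hd a b hab h
      · exact fun h1 _ => absurd h h1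
    · exact fun a => lt_irrefl _
    · exact fun a b c h1 h2 => lt_trans h2 h1
  · intro S hS
    by_cases hU : S = Set.univ
    · obtain ⟨C, hC⟩ := (Set.finite_range fun m : Fin n => g.line m x).bddBelow
      refine ⟨x, hx, C - 1, fun m => ?_, ?_⟩
      · have := hC (Set.mem_range_self (f := fun m : Fin n => g.line m x) m)
        exact ne_of_gt (by linarith)
      · rw [hU]; ext m
        have := hC (Set.mem_range_self (f := fun m : Fin n => g.line m x) m)
        simp only [Set.mem_univ, Set.mem_setOf_eq, true_iff]
        linarith
    · by_cases hE : S = ∅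
      · obtain ⟨C, hC⟩ := (Set.finite_range fun m : Fin n => g.line m x).bddAbove
        refine ⟨x, hx, C + 1, fun m => ?_, ?_⟩
        · have := hC (Set.mem_range_self (f := fun m : Fin n => g.line m x) m)
          exact ne_of_lt (by linarith)
        · rw [hE]; ext m
          have := hC (Set.mem_range_self (f := fun m : Fin n => g.line m x) m)
          simp only [Set.mem_empty_iff_false, Set.mem_setOf_eq, false_iff, not_lt]
          linarith
      · have hSne : S.Nonempty := Set.nonempty_iff_ne_empty.mpr hE
        have hScne : Sᶜ.Nonempty := Set.nonempty_compl.mpr hU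
        obtain ⟨a, haS, hamin⟩ := Set.exists_min_image S (fun m => g.line m x) (Set.toFinite _) hSne
        obtain ⟨b, hbS, hbmax⟩ := Set.exists_max_image Sᶜ (fun m => g.line m x) (Set.toFinite _) hScne
        have hab : g.line b x < g.line a x := by
          rcases lt_trichotomy (g.line b x) (g.line a x) with h | h | h
          · exact h
          · exact absurd h (hd b a (fun hba => hbS (by rw [hba]; exact haS)))
          · exact absurd (hS a haS b h) hbS
        refine ⟨x, hx, (g.line b x + g.line a x) / 2, fun m => ?_, ?_⟩
        · by_cases hm : m ∈ S
          · exact ne_of_gt (by have := hamin m hm; linarith)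
          · have := hbmax m hm
            exact ne_of_lt (by linarith)
        · ext m
          simp only [Set.mem_setOf_eq]
          constructor
          · intro hm; have := hamin m hm; linarith
          · intro hm; by_contra hm'
            have := hbmax m hm'; linarith


lemma not_condorcet_aux (i j k : Fin n) (hij : i ≠ j) (hki : k ≠ i) (hkj : k ≠ j)
    (xa xb : ℝ) (hxa : xa ∈ Set.Ioo (0:ℝ) 1) (hxb : xb ∈ Set.Ioo (0:ℝ) 1)
    (hea : g.line i xa = g.line j xa) (heb : g.line i xb = g.line j xb)
    (hka : g.line i xa < g.line k xa) (hkb : g.line k xb < g.line i xb) :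
    ¬ IsCondorcet g.domain := by
  intro hC
  -- two sample points near xa, where k is above both i and j
  obtain ⟨δ₁, hδ₁, hp₁⟩ := g.pers i k xa hxa hka
  obtain ⟨δ₂, hδ₂, hp₂⟩ := g.pers j k xa hxa (hea ▸ hka)
  obtain ⟨u₁, v₁, hu₁x, hv₁x, hu₁I, hv₁I, hu₁d, hv₁d, hu₁o, hv₁o⟩ :=
    g.near_cross i j hij xa hxa hea (min δ₁ δ₂) (lt_min hδ₁ hδ₂)
  have hu₁k : g.line i u₁ < g.line k u₁ := (hp₁ u₁ (lt_of_lt_of_le hu₁x (min_le_left _ _))).2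
  have hu₁k' : g.line j u₁ < g.line k u₁ := (hp₂ u₁ (lt_of_lt_of_le hu₁x (min_le_right _ _))).2
  have hv₁k : g.line i v₁ < g.line k v₁ := (hp₁ v₁ (lt_of_lt_of_le hv₁x (min_le_left _ _))).2
  have hv₁k' : g.line j v₁ < g.line k v₁ := (hp₂ v₁ (lt_of_lt_of_le hv₁x (min_le_right _ _))).2
  -- two sample points near xb, where k is below both i and j
  obtain ⟨δ₃, hδ₃, hp₃⟩ := g.pers k i xb hxb hkb
  obtain ⟨δ₄, hδ₄, hp₄⟩ := g.pers k j xb hxb (heb ▸ hkb)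
  obtain ⟨u₂, v₂, hu₂x, hv₂x, hu₂I, hv₂I, hu₂d, hv₂d, hu₂o, hv₂o⟩ :=
    g.near_cross i j hij xb hxb heb (min δ₃ δ₄) (lt_min hδ₃ hδ₄)
  have hu₂k : g.line k u₂ < g.line i u₂ := (hp₃ u₂ (lt_of_lt_of_le hu₂x (min_le_left _ _))).2
  have hu₂k' : g.line k u₂ < g.line j u₂ := (hp₄ u₂ (lt_of_lt_of_le hu₂x (min_le_right _ _))).2
  have hv₂k : g.line k v₂ < g.line i v₂ := (hp₃ v₂ (lt_of_lt_of_le hv₂x (min_le_left _ _))).2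
  have hv₂k' : g.line k v₂ < g.line j v₂ := (hp₄ v₂ (lt_of_lt_of_le hv₂x (min_le_right _ _))).2
  -- intermediate value: k crosses i between xa and xb
  have hcont : ContinuousOn (fun y => g.line k y - g.line i y) (Set.Icc (0:ℝ) 1) :=
    fun y hy => ((g.continuous k) y hy).sub ((g.continuous i) y hy)
  have hIVT : ∃ t, t ∈ Set.Ioo (0:ℝ) 1 ∧ g.line k t = g.line i t := by
    rcases lt_trichotomy xa xb with h | h | h
    · obtain ⟨t, htm, hte⟩ := intermediate_value_Ioo' h.le
        (hcont.mono (Set.Icc_subset_Icc hxa.1.le hxb.2.le))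
        (show (0:ℝ) ∈ Set.Ioo ((fun y => g.line k y - g.line i y) xb)
          ((fun y => g.line k y - g.line i y) xa) from
          ⟨show g.line k xb - g.line i xb < 0 by linarith,
           show (0:ℝ) < g.line k xa - g.line i xa by linarith⟩)
      have hte' : g.line k t - g.line i t = 0 := hte
      exact ⟨t, ⟨lt_trans hxa.1 htm.1, lt_trans htm.2 hxb.2⟩, by linarith⟩
    · exfalso; rw [h] at hka; linarith
    · obtain ⟨t, htm, hte⟩ := intermediate_value_Ioo h.le
        (hcont.mono (Set.Icc_subset_Icc hxb.1.le hxa.2.le))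
        (show (0:ℝ) ∈ Set.Ioo ((fun y => g.line k y - g.line i y) xb)
          ((fun y => g.line k y - g.line i y) xa) from
          ⟨show g.line k xb - g.line i xb < 0 by linarith,
           show (0:ℝ) < g.line k xa - g.line i xa by linarith⟩)
      have hte' : g.line k t - g.line i t = 0 := hte
      exact ⟨t, ⟨lt_trans hxb.1 htm.1, lt_trans htm.2 hxa.2⟩, by linarith⟩
  obtain ⟨t, htI, hte⟩ := hIVT
  have hjt : g.line j t ≠ g.line i t := by
    intro h
    exact g.no_triple j i k hij.symm (Ne.symm hki) (Ne.symm hkj) t (Set.mem_Icc_of_Ioo htI) ⟨h, hte.symm⟩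
  rcases lt_or_gt_of_ne hjt with hcase | hcase
  · -- j passes below the crossing of i and k: get a point with order i ≻ k ≻ j
    obtain ⟨δ₅, hδ₅, hp₅⟩ := g.pers j i t htI hcase
    obtain ⟨δ₆, hδ₆, hp₆⟩ := g.pers j k t htI (by rw [hte]; exact hcase)
    obtain ⟨u₃, v₃, hu₃x, hv₃x, hu₃I, hv₃I, hu₃d, hv₃d, hu₃o, hv₃o⟩ :=
      g.near_cross i k (Ne.symm hki) t htI hte.symm (min δ₅ δ₆) (lt_min hδ₅ hδ₆)
    have hu₃a : g.line j u₃ < g.line i u₃ := (hp₅ u₃ (lt_of_lt_of_le hu₃x (min_le_left _ _))).2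
    have hu₃b : g.line j u₃ < g.line k u₃ := (hp₆ u₃ (lt_of_lt_of_le hu₃x (min_le_right _ _))).2
    -- profile: k≻j≻i (at v₁), j≻i≻k (at v₂), i≻k≻j (at u₃)
    set P : Fin 3 → (Fin n → Fin n → Prop) :=
      fun v => if v = 0 then (fun a b => g.line b v₁ < g.line a v₁)
        else if v = 1 then (fun a b => g.line b v₂ < g.line a v₂)
        else (fun a b => g.line b u₃ < g.line a u₃) with hP
    have e0 : P 0 = fun a b => g.line b v₁ < g.line a v₁ := by simp [hP]
    have e1 : P 1 = fun a b => g.line b v₂ < g.line a v₂ := by simp [hP]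
    have e2 : P 2 = fun a b => g.line b u₃ < g.line a u₃ := by simp [hP]
    have hmem : ∀ v : Fin 3, P v ∈ g.domain := by
      intro v
      simp only [hP]
      split_ifs
      · exact g.valueOrder_mem v₁ (Set.mem_Icc_of_Ioo hv₁I) hv₁d
      · exact g.valueOrder_mem v₂ (Set.mem_Icc_of_Ioo hv₂I) hv₂d
      · exact g.valueOrder_mem u₃ (Set.mem_Icc_of_Ioo hu₃I) hu₃d
    have hT := hC 3 P ⟨1, by norm_num⟩ hmem
    have cik : Nat.card {v : Fin 3 // P v i k} = 2 := by
      refine card3_011 _ ?_ ?_ ?_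
      · simp only [e0]; exact not_lt.mpr hv₁k.le
      · simp only [e1]; exact hv₂k
      · simp only [e2]; exact hu₃o
    have cki : Nat.card {v : Fin 3 // P v k i} = 1 := by
      refine card3_100 _ ?_ ?_ ?_
      · simp only [e0]; exact hv₁k
      · simp only [e1]; exact not_lt.mpr hv₂k.le
      · simp only [e2]; exact not_lt.mpr hu₃o.le
    have ckj : Nat.card {v : Fin 3 // P v k j} = 2 := by
      refine card3_101 _ ?_ ?_ ?_
      · simp only [e0]; exact hv₁k'
      · simp only [e1]; exact not_lt.mpr hv₂k'.le
      · simp only [e2]; exact hu₃b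
    have cjk : Nat.card {v : Fin 3 // P v j k} = 1 := by
      refine card3_010 _ ?_ ?_ ?_
      · simp only [e0]; exact not_lt.mpr hv₁k'.le
      · simp only [e1]; exact hv₂k'
      · simp only [e2]; exact not_lt.mpr hu₃b.le
    have cij : Nat.card {v : Fin 3 // P v i j} = 1 := by
      refine card3_001 _ ?_ ?_ ?_
      · simp only [e0]; exact not_lt.mpr hv₁o.le
      · simp only [e1]; exact not_lt.mpr hv₂o.le
      · simp only [e2]; exact hu₃a
    have cji : Nat.card {v : Fin 3 // P v j i} = 2 := by
      refine card3_110 _ ?_ ?_ ?_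
      · simp only [e0]; exact hv₁o
      · simp only [e1]; exact hv₂o
      · simp only [e2]; exact not_lt.mpr hu₃a.le
    have majik : MajPrefers P i k := by unfold MajPrefers; rw [cik, cki]; omega
    have majkj : MajPrefers P k j := by unfold MajPrefers; rw [ckj, cjk]; omega
    have hmaj := hT majik majkj
    unfold MajPrefers at hmaj
    rw [cij, cji] at hmaj
    omega
  · -- j passes above the crossing of i and k: get a point with order j ≻ k ≻ i
    obtain ⟨δ₅, hδ₅, hp₅⟩ := g.pers i j t htI hcase
    obtain ⟨δ₆, hδ₆, hp₆⟩ := g.pers k j t htI (by rw [hte]; exact hcase)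
    obtain ⟨u₃, v₃, hu₃x, hv₃x, hu₃I, hv₃I, hu₃d, hv₃d, hu₃o, hv₃o⟩ :=
      g.near_cross i k (Ne.symm hki) t htI hte.symm (min δ₅ δ₆) (lt_min hδ₅ hδ₆)
    have hv₃a : g.line i v₃ < g.line j v₃ := (hp₅ v₃ (lt_of_lt_of_le hv₃x (min_le_left _ _))).2
    have hv₃b : g.line k v₃ < g.line j v₃ := (hp₆ v₃ (lt_of_lt_of_le hv₃x (min_le_right _ _))).2
    -- profile: k≻i≻j (at u₁), i≻j≻k (at u₂), j≻k≻i (at v₃)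
    set P : Fin 3 → (Fin n → Fin n → Prop) :=
      fun v => if v = 0 then (fun a b => g.line b u₁ < g.line a u₁)
        else if v = 1 then (fun a b => g.line b u₂ < g.line a u₂)
        else (fun a b => g.line b v₃ < g.line a v₃) with hP
    have e0 : P 0 = fun a b => g.line b u₁ < g.line a u₁ := by simp [hP]
    have e1 : P 1 = fun a b => g.line b u₂ < g.line a u₂ := by simp [hP]
    have e2 : P 2 = fun a b => g.line b v₃ < g.line a v₃ := by simp [hP]
    have hmem : ∀ v : Fin 3, P v ∈ g.domain := by
      intro v
      simp only [hP]
      split_ifs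
      · exact g.valueOrder_mem u₁ (Set.mem_Icc_of_Ioo hu₁I) hu₁d
      · exact g.valueOrder_mem u₂ (Set.mem_Icc_of_Ioo hu₂I) hu₂d
      · exact g.valueOrder_mem v₃ (Set.mem_Icc_of_Ioo hv₃I) hv₃d
    have hT := hC 3 P ⟨1, by norm_num⟩ hmem
    have cki : Nat.card {v : Fin 3 // P v k i} = 2 := by
      refine card3_101 _ ?_ ?_ ?_
      · simp only [e0]; exact hu₁k
      · simp only [e1]; exact not_lt.mpr hu₂k.le
      · simp only [e2]; exact hv₃o
    have cik : Nat.card {v : Fin 3 // P v i k} = 1 := by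
      refine card3_010 _ ?_ ?_ ?_
      · simp only [e0]; exact not_lt.mpr hu₁k.le
      · simp only [e1]; exact hu₂k
      · simp only [e2]; exact not_lt.mpr hv₃o.le
    have cij : Nat.card {v : Fin 3 // P v i j} = 2 := by
      refine card3_110 _ ?_ ?_ ?_
      · simp only [e0]; exact hu₁o
      · simp only [e1]; exact hu₂o
      · simp only [e2]; exact not_lt.mpr hv₃a.le
    have cji : Nat.card {v : Fin 3 // P v j i} = 1 := by
      refine card3_001 _ ?_ ?_ ?_
      · simp only [e0]; exact not_lt.mpr hu₁o.le
      · simp only [e1]; exact not_lt.mpr hu₂o.le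
      · simp only [e2]; exact hv₃a
    have ckj : Nat.card {v : Fin 3 // P v k j} = 1 := by
      refine card3_100 _ ?_ ?_ ?_
      · simp only [e0]; exact hu₁k'
      · simp only [e1]; exact not_lt.mpr hu₂k'.le
      · simp only [e2]; exact not_lt.mpr hv₃b.le
    have cjk : Nat.card {v : Fin 3 // P v j k} = 2 := by
      refine card3_011 _ ?_ ?_ ?_
      · simp only [e0]; exact not_lt.mpr hu₁k'.le
      · simp only [e1]; exact hu₂k'
      · simp only [e2]; exact hv₃b
    have majki : MajPrefers P k i := by unfold MajPrefers; rw [cki, cik]; omega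
    have majij : MajPrefers P i j := by unfold MajPrefers; rw [cij, cji]; omega
    have hmaj := hT majki majij
    unfold MajPrefers at hmaj
    rw [ckj, cjk] at hmaj
    omega

end GenArrangement

/-- if two pseudolines of a generalised arrangement intersect twice
at different levels, then the associated domain is not Condorcet. -/
theorem not_condorcet_of_levels_differ (n : ℕ) (g : GenArrangement n)
    (i j : Fin n) (hij : i ≠ j) (x₁ x₂ : ℝ)
    (hx₁ : x₁ ∈ g.Z i j) (hx₂ : x₂ ∈ g.Z i j)
    (hlev : g.level i j x₁ ≠ g.level i j x₂) :
    ¬ IsCondorcet g.domain := by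
  obtain ⟨hx₁I, hx₁e⟩ := hx₁
  obtain ⟨hx₂I, hx₂e⟩ := hx₂
  have hne3 : ∀ x : ℝ, x ∈ Set.Ioo (0:ℝ) 1 → g.line i x = g.line j x →
      ∀ k : Fin n, k ≠ i → k ≠ j → g.line k x ≠ g.line i x := by
    intro x hx he k hki hkj hc
    exact g.no_triple k i j hki hij hkj x (Set.mem_Icc_of_Ioo hx) ⟨hc, he⟩
  have hkey : ∃ k : Fin n, k ≠ i ∧ k ≠ j ∧
      ((g.line i x₁ < g.line k x₁ ∧ g.line k x₂ < g.line i x₂) ∨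
       (g.line k x₁ < g.line i x₁ ∧ g.line i x₂ < g.line k x₂)) := by
    by_contra hcon
    have hiff : ∀ k : Fin n, k ≠ i → k ≠ j →
        (g.line i x₁ < g.line k x₁ ↔ g.line i x₂ < g.line k x₂) := by
      intro k hki hkj
      have h1 := (hne3 x₁ hx₁I hx₁e k hki hkj).lt_or_gt
      have h2 := (hne3 x₂ hx₂I hx₂e k hki hkj).lt_or_gt
      constructor
      · intro hA
        rcases h2 with h | h
        · exact absurd ⟨k, hki, hkj, Or.inl ⟨hA, h⟩⟩ hcon
        · exact h
      · intro hA
        rcases h1 with h | h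
        · exact absurd ⟨k, hki, hkj, Or.inr ⟨h, hA⟩⟩ hcon
        · exact h
    apply hlev
    unfold GenArrangement.level
    apply Nat.card_congr
    apply Equiv.subtypeEquivRight
    intro k
    by_cases hki : k = i
    · subst hki; simp
    by_cases hkj : k = j
    · subst hkj; simp
    simp [hki, hkj, hiff k hki hkj]
  obtain ⟨k, hki, hkj, hcase⟩ := hkey
  rcases hcase with ⟨h1, h2⟩ | ⟨h1, h2⟩
  · exact g.not_condorcet_aux i j k hij hki hkj x₁ x₂ hx₁I hx₂I hx₁e hx₂e h1 h2
  · exact g.not_condorcet_aux i j k hij hki hkj x₂ x₁ hx₂I hx₁I hx₂e hx₁e h2 h1
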